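/- A formula A is a tautology if and only if every co-clique of A contains two leaves labelled by complementary literals (some variable P occurring both as P and as ¬P). -/
import Mathlib


/-- Literals: propositional variables and their negations. -/
inductive Lit where
  | pos : Nat → Lit
  | neg : Nat → Lit
deriving DecidableEq

/-- Formulas of classical propositional logic, built from literals by binary ∧ and ∨. -/
inductive Formula where
  | lit : Lit → Formula
  | and : Formula → Formula → Formula
  | or  : Formula → Formula → Formula

/-- Leaves of the parse tree, identified by their positions (paths: `false` = left,
`true` = right). -/
def Formula.leaves : Formula → Set (List Bool)
  | .lit _ => {[]}
  | .and A B => (fun p => false :: p) '' A.leaves ∪ (fun p => true :: p) '' B.leaves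
  | .or A B  => (fun p => false :: p) '' A.leaves ∪ (fun p => true :: p) '' B.leaves

/-- The literal labelling the leaf at a given path, if any. -/
def Formula.labelAt : Formula → List Bool → Option Lit
  | .lit l, [] => some l
  | .and A B, b :: p => if b then B.labelAt p else A.labelAt p
  | .or A B, b :: p => if b then B.labelAt p else A.labelAt p
  | _, _ => none

/-- ∨-resolutions of a formula: delete one argument subtree at each ∨-vertex. -/
inductive Res : Formula → Type where
  | lit : (l : Lit) → Res (.lit l)
  | and : {A B : Formula} → Res A → Res B → Res (.and A B)
  | orL : {A B : Formula} → Res A → Res (.or A B)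
  | orR : {A B : Formula} → Res B → Res (.or A B)

/-- The set of leaves of `A` retained by an ∨-resolution. -/
def Res.leafSet : {A : Formula} → Res A → Set (List Bool)
  | _, .lit _ => {[]}
  | _, .and ra rb => (fun p => false :: p) '' ra.leafSet ∪ (fun p => true :: p) '' rb.leafSet
  | _, .orL ra => (fun p => false :: p) '' ra.leafSet
  | _, .orR rb => (fun p => true :: p) '' rb.leafSet

/-- Cliques: leaf sets of ∨-resolutions. -/
def Formula.cliques (A : Formula) : Set (Set (List Bool)) :=
  {L | ∃ r : Res A, r.leafSet = L}

/-- ∧-resolutions of a formula: delete one argument subtree at each ∧-vertex. -/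
inductive CoRes : Formula → Type where
  | lit : (l : Lit) → CoRes (.lit l)
  | or : {A B : Formula} → CoRes A → CoRes B → CoRes (.or A B)
  | andL : {A B : Formula} → CoRes A → CoRes (.and A B)
  | andR : {A B : Formula} → CoRes B → CoRes (.and A B)

/-- The set of leaves of `A` retained by an ∧-resolution. -/
def CoRes.leafSet : {A : Formula} → CoRes A → Set (List Bool)
  | _, .lit _ => {[]}
  | _, .or ra rb => (fun p => false :: p) '' ra.leafSet ∪ (fun p => true :: p) '' rb.leafSet
  | _, .andL ra => (fun p => false :: p) '' ra.leafSet
  | _, .andR rb => (fun p => true :: p) '' rb.leafSet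

/-- Co-cliques: leaf sets of ∧-resolutions. -/
def Formula.cocliques (A : Formula) : Set (Set (List Bool)) :=
  {M | ∃ r : CoRes A, r.leafSet = M}

/-- Truth of a literal under a valuation. -/
def Lit.eval (v : Nat → Bool) : Lit → Bool
  | .pos n => v n
  | .neg n => !(v n)

/-- Standard Boolean semantics. -/
def Formula.eval (v : Nat → Bool) : Formula → Bool
  | .lit l => l.eval v
  | .and A B => A.eval v && B.eval v
  | .or A B => A.eval v || B.eval v

/-- Number of ∨-vertices in the parse tree. -/
def Formula.orCount : Formula → Nat
  | .lit _ => 0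
  | .and A B => A.orCount + B.orCount
  | .or A B => A.orCount + B.orCount + 1

/-- Number of ∧-vertices in the parse tree. -/
def Formula.andCount : Formula → Nat
  | .lit _ => 0
  | .and A B => A.andCount + B.andCount + 1
  | .or A B => A.andCount + B.andCount

/-- Complement of a literal. -/
def Lit.compl : Lit → Lit
  | .pos n => .neg n
  | .neg n => .pos n

/-- De Morgan dual: swap ∧ with ∨ and negate every literal. -/
def Formula.dual : Formula → Formula
  | .lit l => .lit l.compl
  | .and A B => .or A.dual B.dual
  | .or A B => .and A.dual B.dual

lemma eval_false_of_leaves_false {A : Formula} (r : CoRes A) (v : Nat → Bool)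
    (h : ∀ p ∈ r.leafSet, ∀ l, A.labelAt p = some l → l.eval v = false) :
    A.eval v = false := by
  induction r with
  | lit l =>
    have := h [] rfl l rfl
    simpa [Formula.eval] using this
  | or ra rb iha ihb =>
    have ha : _ = false := iha (fun p hp l hl => by
      exact h (false :: p) (Or.inl ⟨p, hp, rfl⟩) l (by simpa [Formula.labelAt] using hl))
    have hb : _ = false := ihb (fun p hp l hl => by
      exact h (true :: p) (Or.inr ⟨p, hp, rfl⟩) l (by simpa [Formula.labelAt] using hl))
    simp [Formula.eval, ha, hb]
  | andL ra iha =>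
    have ha : _ = false := iha (fun p hp l hl => by
      exact h (false :: p) ⟨p, hp, rfl⟩ l (by simpa [Formula.labelAt] using hl))
    simp [Formula.eval, ha]
  | andR rb ihb =>
    have hb : _ = false := ihb (fun p hp l hl => by
      exact h (true :: p) ⟨p, hp, rfl⟩ l (by simpa [Formula.labelAt] using hl))
    simp [Formula.eval, hb]

lemma exists_cores_of_eval_false (A : Formula) (v : Nat → Bool)
    (h : A.eval v = false) :
    ∃ r : CoRes A, ∀ p ∈ r.leafSet, ∀ l, A.labelAt p = some l → l.eval v = false := by
  induction A with
  | lit l =>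
    refine ⟨CoRes.lit l, ?_⟩
    rintro p rfl l' hl'
    simp only [Formula.labelAt, Option.some.injEq] at hl'
    subst hl'
    simpa [Formula.eval] using h
  | and A B iha ihb =>
    simp only [Formula.eval, Bool.and_eq_false_iff] at h
    rcases h with h | h
    · obtain ⟨ra, hra⟩ := iha h
      refine ⟨CoRes.andL ra, ?_⟩
      rintro p ⟨q, hq, rfl⟩ l hl
      exact hra q hq l (by simpa [Formula.labelAt] using hl)
    · obtain ⟨rb, hrb⟩ := ihb h
      refine ⟨CoRes.andR rb, ?_⟩
      rintro p ⟨q, hq, rfl⟩ l hl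
      exact hrb q hq l (by simpa [Formula.labelAt] using hl)
  | or A B iha ihb =>
    simp only [Formula.eval, Bool.or_eq_false_iff] at h
    obtain ⟨ra, hra⟩ := iha h.1
    obtain ⟨rb, hrb⟩ := ihb h.2
    refine ⟨CoRes.or ra rb, ?_⟩
    rintro p (⟨q, hq, rfl⟩ | ⟨q, hq, rfl⟩) l hl
    · exact hra q hq l (by simpa [Formula.labelAt] using hl)
    · exact hrb q hq l (by simpa [Formula.labelAt] using hl)

theorem tautology_iff_cocliques_complementary (A : Formula) :
    (∀ v : Nat → Bool, A.eval v = true) ↔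
      ∀ M ∈ A.cocliques, ∃ p ∈ M, ∃ q ∈ M, ∃ n : Nat,
        A.labelAt p = some (.pos n) ∧ A.labelAt q = some (.neg n) := by
  constructor
  · intro htaut M hM
    obtain ⟨r, rfl⟩ := hM
    by_contra hno
    push_neg at hno
    classical
    set v : Nat → Bool := fun n =>
      if ∃ p ∈ r.leafSet, A.labelAt p = some (.neg n) then true else false with hv
    have hfalse : A.eval v = false := by
      apply eval_false_of_leaves_false r v
      intro p hp l hl
      cases l with
      | pos n =>
        simp only [Lit.eval, hv]
        rw [if_neg]
        rintro ⟨q, hq, hql⟩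
        exact hno p hp q hq n hl hql
      | neg n =>
        simp only [Lit.eval, hv]
        rw [if_pos ⟨p, hp, hl⟩]
        rfl
    rw [htaut v] at hfalse
    simp at hfalse
  · intro hcompl v
    by_contra hne
    have hfalse : A.eval v = false := by
      cases h : A.eval v with
      | true => exact absurd h hne
      | false => rfl
    obtain ⟨r, hr⟩ := exists_cores_of_eval_false A v hfalse
    obtain ⟨p, hp, q, hq, n, hpn, hqn⟩ := hcompl r.leafSet ⟨r, rfl⟩
    have h1 := hr p hp _ hpn
    have h2 := hr q hq _ hqn
    simp [Lit.eval] at h1 h2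
    rw [h1] at h2
    exact Bool.false_ne_true h2
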